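/- Every odd-dimensional discrete manifold has zero Euler characteristic: if d is odd and G is a d-manifold, then χ(G) = 0. -/

import Mathlib

open Finset Polynomial

namespace SphereFormula

variable {V : Type} [DecidableEq V]

/-- A finite abstract simplicial complex: a finite collection of nonempty finite sets
that is closed under taking nonempty subsets. -/
def IsComplex (G : Finset (Finset V)) : Prop :=
  ∀ x ∈ G, x.Nonempty ∧ ∀ y, y ⊆ x → y.Nonempty → y ∈ G

/-- `w x = (-1)^(dim x)` where `dim x = |x| - 1`. -/
def w (x : Finset V) : ℤ := (-1) ^ (x.card - 1)

/-- Euler characteristic of a finite set of simplices: `χ(A) = Σ_{x ∈ A} w x`. -/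
def chi (A : Finset (Finset V)) : ℤ := ∑ x ∈ A, w x

/-- The star `U(x) = {y ∈ G : x ⊆ y}`. -/
def star (G : Finset (Finset V)) (x : Finset V) : Finset (Finset V) :=
  G.filter fun y => x ⊆ y

/-- The unit ball `B(x) = {z ∈ G : z ⊆ y for some y ∈ U(x)}` (closure of the star). -/
def ball (G : Finset (Finset V)) (x : Finset V) : Finset (Finset V) :=
  G.filter fun z => ∃ y ∈ G, x ⊆ y ∧ z ⊆ y

/-- The unit sphere `S(x) = B(x) \ U(x)`. -/
def sphere (G : Finset (Finset V)) (x : Finset V) : Finset (Finset V) :=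
  ball G x \ star G x

/-- The vertex set of `G`: those `v` with `{v} ∈ G`. -/
def verts (G : Finset (Finset V)) : Finset V :=
  (G.biUnion id).filter fun v => {v} ∈ G

/-- Contractibility, defined inductively: a single vertex complex is contractible, and `G`
is contractible if there is `x ∈ G` with both `S(x)` and `G \ U(x)` contractible. -/
inductive Contractible : Finset (Finset V) → Prop where
  | point (v : V) : Contractible ({({v} : Finset V)} : Finset (Finset V))
  | step (G : Finset (Finset V)) (x : Finset V) (hx : x ∈ G)
      (hS : Contractible (sphere G x)) (hG : Contractible (G \ star G x)) :
      Contractible G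

mutual
  /-- `G` is a `d`-manifold (`d ≥ 0`): every unit sphere `S(x)` is a `(d-1)`-sphere. -/
  inductive IsManifold : ℤ → Finset (Finset V) → Prop where
    | mk (d : ℤ) (G : Finset (Finset V)) (hd : 0 ≤ d)
        (h : ∀ x ∈ G, IsSphere (d - 1) (sphere G x)) : IsManifold d G

  /-- `d`-spheres: the empty complex is the `(-1)`-sphere, and a `d`-sphere is a
  `d`-manifold `G` such that `G \ U(x)` is contractible for some `x ∈ G`. -/
  inductive IsSphere : ℤ → Finset (Finset V) → Prop where
    | empty : IsSphere (-1) (∅ : Finset (Finset V))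
    | mk (d : ℤ) (G : Finset (Finset V)) (hm : IsManifold d G)
        (h : ∃ x ∈ G, Contractible (G \ star G x)) : IsSphere d G
end

/-- The f-function `f_G(t) = 1 + Σ_{k ≥ 0} f_k(G) t^(k+1) = 1 + Σ_{x ∈ G} t^|x|`. -/
noncomputable def fPoly (G : Finset (Finset V)) : Polynomial ℚ :=
  1 + ∑ x ∈ G, Polynomial.X ^ x.card

/-- `F_H(t) = ∫_0^t f_H(s) ds = t + Σ_{k ≥ 0} f_k(H) t^(k+2)/(k+2)`. -/
noncomputable def FPoly (H : Finset (Finset V)) : Polynomial ℚ :=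
  Polynomial.X +
    ∑ x ∈ H, Polynomial.C (((x.card : ℚ) + 1)⁻¹) * Polynomial.X ^ (x.card + 1)

/-- The join `G + H = G ∪ H ∪ {x ∪ y : x ∈ G, y ∈ H}`. -/
def joinC (G H : Finset (Finset V)) : Finset (Finset V) :=
  G ∪ H ∪ (G ×ˢ H).image fun p => p.1 ∪ p.2

/-- The barycentric refinement: simplices are the nonempty chains in `(G, ⊆)`. -/
def bary (G : Finset (Finset V)) : Finset (Finset (Finset V)) :=
  G.powerset.filter fun c => c.Nonempty ∧ ∀ x ∈ c, ∀ y ∈ c, x ⊆ y ∨ y ⊆ x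

/-- `f` is locally injective: distinct vertices of a common simplex have distinct values. -/
def LocallyInjective (G : Finset (Finset V)) (f : V → ℤ) : Prop :=
  ∀ x ∈ G, ∀ v ∈ x, ∀ u ∈ x, v ≠ u → f v ≠ f u

/-! ### Auxiliary lemmas -/

section Aux

variable {V : Type} [DecidableEq V]

lemma mem_ball_iff {G : Finset (Finset V)} {x z : Finset V} :
    z ∈ ball G x ↔ z ∈ G ∧ ∃ y ∈ G, x ⊆ y ∧ z ⊆ y := by
  simp [ball]

lemma mem_star_iff {G : Finset (Finset V)} {x z : Finset V} :
    z ∈ star G x ↔ z ∈ G ∧ x ⊆ z := by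
  simp [star]

lemma star_subset_ball {G : Finset (Finset V)} {x : Finset V} : star G x ⊆ ball G x := by
  intro y hy
  rw [mem_star_iff] at hy
  exact mem_ball_iff.mpr ⟨hy.1, y, hy.1, hy.2, Finset.Subset.refl y⟩

lemma star_subset {G : Finset (Finset V)} {x : Finset V} : star G x ⊆ G :=
  Finset.filter_subset _ _

lemma ball_subset {G : Finset (Finset V)} {x : Finset V} : ball G x ⊆ G :=
  Finset.filter_subset _ _

/-- The key involution lemma: if `s` avoids `{v}` and is closed under adding/removing `v`,
the weights sum to zero. -/
lemma sum_w_eq_zero {s : Finset (Finset V)} {v : V}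
    (hne : ∀ t ∈ s, t.Nonempty) (hv : ({v} : Finset V) ∉ s)
    (h1 : ∀ t ∈ s, v ∈ t → t.erase v ∈ s)
    (h2 : ∀ t ∈ s, v ∉ t → insert v t ∈ s) :
    ∑ t ∈ s, w t = 0 := by
  refine Finset.sum_involution
    (fun t _ => if v ∈ t then t.erase v else insert v t) ?_ ?_ ?_ ?_
  · intro t ht
    by_cases hvt : v ∈ t
    · simp only [hvt, if_true]
      have htv : t ≠ {v} := fun h => hv (h ▸ ht)
      have hcard : 2 ≤ t.card := by
        by_contra hc
        push_neg at hc
        have h1c : 1 ≤ t.card := Finset.card_pos.mpr ⟨v, hvt⟩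
        have hone : t.card = 1 := by omega
        obtain ⟨u, hu⟩ := Finset.card_eq_one.mp hone
        apply htv
        rw [hu] at hvt ⊢
        rw [Finset.mem_singleton] at hvt
        rw [hvt]
      have hec : (t.erase v).card = t.card - 1 := Finset.card_erase_of_mem hvt
      have e1 : t.card - 1 = (t.card - 2) + 1 := by omega
      have e2 : (t.erase v).card - 1 = t.card - 2 := by omega
      unfold w
      rw [e1, e2, pow_succ]
      ring
    · simp only [hvt, if_false]
      have hic : (insert v t).card = t.card + 1 := Finset.card_insert_of_notMem hvt
      have h1c : 1 ≤ t.card := Finset.card_pos.mpr (hne t ht)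
      have e1 : (insert v t).card - 1 = (t.card - 1) + 1 := by omega
      unfold w
      rw [e1, pow_succ]
      ring
  · intro t ht _
    by_cases hvt : v ∈ t
    · simp only [hvt, if_true]
      intro h
      apply Finset.notMem_erase v t
      rw [h]
      exact hvt
    · simp only [hvt, if_false]
      intro h
      apply hvt
      rw [← h]
      exact Finset.mem_insert_self v t
  · intro t ht
    by_cases hvt : v ∈ t
    · simpa only [hvt, if_true] using h1 t ht hvt
    · simpa only [hvt, if_false] using h2 t ht hvt
  · intro t ht
    by_cases hvt : v ∈ t
    · have : v ∉ t.erase v := Finset.notMem_erase v t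
      simp only [hvt, if_true, this, if_false]
      exact Finset.insert_erase hvt
    · have : v ∈ insert v t := Finset.mem_insert_self v t
      simp only [hvt, if_false, this, if_true]
      exact Finset.erase_insert hvt

lemma chi_ball_eq_one {G : Finset (Finset V)} (hG : IsComplex G) {x : Finset V}
    (hx : x ∈ G) : chi (ball G x) = 1 := by
  obtain ⟨hxne, hcl⟩ := hG x hx
  obtain ⟨v, hv⟩ := hxne
  have hvG : ({v} : Finset V) ∈ ball G x := by
    refine mem_ball_iff.mpr ⟨?_, x, hx, Finset.Subset.refl x, Finset.singleton_subset_iff.mpr hv⟩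
    exact hcl {v} (Finset.singleton_subset_iff.mpr hv) (Finset.singleton_nonempty v)
  have hrest : ∑ t ∈ (ball G x).erase {v}, w t = 0 := by
    refine sum_w_eq_zero ?_ (Finset.notMem_erase _ _) ?_ ?_
    · intro t ht
      have ht' := Finset.mem_of_mem_erase ht
      exact (hG t (ball_subset ht')).1
    · intro t ht hvt
      have htne : t ≠ {v} := Finset.ne_of_mem_erase ht
      have ht' := Finset.mem_of_mem_erase ht
      rw [mem_ball_iff] at ht'
      obtain ⟨htG, y, hyG, hxy, hty⟩ := ht'
      have hten : (t.erase v).Nonempty := by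
        rcases Finset.eq_empty_or_nonempty (t.erase v) with h | h
        · exfalso
          apply htne
          apply Finset.eq_singleton_iff_unique_mem.mpr
          refine ⟨hvt, fun u hu => ?_⟩
          by_contra hne
          exact (Finset.eq_empty_iff_forall_notMem.mp h u)
            (Finset.mem_erase.mpr ⟨hne, hu⟩)
        · exact h
      have hin : t.erase v ∈ G :=
        (hG t htG).2 _ (Finset.erase_subset v t) hten
      refine Finset.mem_erase.mpr ⟨?_, ?_⟩
      · intro h
        have : v ∈ t.erase v := h ▸ Finset.mem_singleton_self v
        exact Finset.notMem_erase v t this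
      · exact mem_ball_iff.mpr ⟨hin, y, hyG, hxy, (Finset.erase_subset v t).trans hty⟩
    · intro t ht hvt
      have htne := Finset.ne_of_mem_erase ht
      have ht' := Finset.mem_of_mem_erase ht
      rw [mem_ball_iff] at ht'
      obtain ⟨htG, y, hyG, hxy, hty⟩ := ht'
      have hisub : insert v t ⊆ y := Finset.insert_subset (hxy hv) hty
      have hin : insert v t ∈ G :=
        (hG y hyG).2 _ hisub ⟨v, Finset.mem_insert_self v t⟩
      refine Finset.mem_erase.mpr ⟨?_, mem_ball_iff.mpr ⟨hin, y, hyG, hxy, hisub⟩⟩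
      intro h
      obtain ⟨u, hu⟩ := (hG t htG).1
      have : u ∈ insert v t := Finset.mem_insert_of_mem hu
      rw [h, Finset.mem_singleton] at this
      exact hvt (this ▸ hu)
  have := Finset.add_sum_erase _ w hvG
  unfold chi
  rw [← this, hrest, add_zero]
  simp [w]

/-- For a complex `G` and `z ∈ G`, the sum of weights of simplices contained in `z` is `1`. -/
lemma sum_w_subsets {G : Finset (Finset V)} (hG : IsComplex G) {z : Finset V}
    (hz : z ∈ G) : ∑ x ∈ G.filter (· ⊆ z), w x = 1 := by
  obtain ⟨hzne, hcl⟩ := hG z hz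
  obtain ⟨v, hv⟩ := hzne
  have hvG : ({v} : Finset V) ∈ G.filter (· ⊆ z) := by
    refine Finset.mem_filter.mpr ⟨?_, Finset.singleton_subset_iff.mpr hv⟩
    exact hcl {v} (Finset.singleton_subset_iff.mpr hv) (Finset.singleton_nonempty v)
  have hrest : ∑ t ∈ (G.filter (· ⊆ z)).erase {v}, w t = 0 := by
    refine sum_w_eq_zero ?_ (Finset.notMem_erase _ _) ?_ ?_
    · intro t ht
      have ht' := Finset.mem_of_mem_erase ht
      exact (hG t (Finset.mem_filter.mp ht').1).1
    · intro t ht hvt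
      have htne : t ≠ {v} := Finset.ne_of_mem_erase ht
      obtain ⟨htG, htz⟩ := Finset.mem_filter.mp (Finset.mem_of_mem_erase ht)
      have hene : (t.erase v).Nonempty := by
        rcases Finset.eq_empty_or_nonempty (t.erase v) with h | h
        · exfalso
          apply htne
          apply Finset.eq_singleton_iff_unique_mem.mpr
          refine ⟨hvt, fun u hu => ?_⟩
          by_contra hne
          exact (Finset.eq_empty_iff_forall_notMem.mp h u)
            (Finset.mem_erase.mpr ⟨hne, hu⟩)
        · exact h
      refine Finset.mem_erase.mpr ⟨?_, Finset.mem_filter.mpr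
        ⟨(hG t htG).2 _ (Finset.erase_subset v t) hene, (Finset.erase_subset v t).trans htz⟩⟩
      intro h
      have : v ∈ t.erase v := h ▸ Finset.mem_singleton_self v
      exact Finset.notMem_erase v t this
    · intro t ht hvt
      obtain ⟨htG, htz⟩ := Finset.mem_filter.mp (Finset.mem_of_mem_erase ht)
      have hisub : insert v t ⊆ z := Finset.insert_subset hv htz
      refine Finset.mem_erase.mpr ⟨?_, Finset.mem_filter.mpr
        ⟨hcl _ hisub ⟨v, Finset.mem_insert_self v t⟩, hisub⟩⟩
      intro h
      obtain ⟨u, hu⟩ := (hG t htG).1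
      have : u ∈ insert v t := Finset.mem_insert_of_mem hu
      rw [h, Finset.mem_singleton] at this
      exact hvt (this ▸ hu)
  have := Finset.add_sum_erase _ w hvG
  rw [← this, hrest, add_zero]
  simp [w]

lemma isComplex_sphere {G : Finset (Finset V)} (hG : IsComplex G) (x : Finset V) :
    IsComplex (sphere G x) := by
  intro z hz
  rw [sphere, Finset.mem_sdiff, mem_ball_iff, mem_star_iff] at hz
  obtain ⟨⟨hzG, y, hyG, hxy, hzy⟩, hns⟩ := hz
  refine ⟨(hG z hzG).1, fun z' hz' hz'ne => ?_⟩
  rw [sphere, Finset.mem_sdiff, mem_ball_iff, mem_star_iff]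
  refine ⟨⟨(hG z hzG).2 z' hz' hz'ne, y, hyG, hxy, hz'.trans hzy⟩, ?_⟩
  rintro ⟨hz'G, hxz'⟩
  exact hns ⟨hzG, hxz'.trans hz'⟩

lemma isComplex_sdiff_star {G : Finset (Finset V)} (hG : IsComplex G) (x : Finset V) :
    IsComplex (G \ star G x) := by
  intro z hz
  rw [Finset.mem_sdiff, mem_star_iff] at hz
  obtain ⟨hzG, hns⟩ := hz
  refine ⟨(hG z hzG).1, fun z' hz' hz'ne => ?_⟩
  rw [Finset.mem_sdiff, mem_star_iff]
  refine ⟨(hG z hzG).2 z' hz' hz'ne, ?_⟩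
  rintro ⟨hz'G, hxz'⟩
  exact hns ⟨hzG, hxz'.trans hz'⟩

lemma chi_ball_split {G : Finset (Finset V)} (x : Finset V) :
    chi (ball G x) = chi (sphere G x) + chi (star G x) := by
  unfold chi sphere
  exact (Finset.sum_sdiff star_subset_ball).symm

lemma chi_split {G : Finset (Finset V)} (x : Finset V) :
    chi G = chi (G \ star G x) + chi (star G x) := by
  unfold chi
  exact (Finset.sum_sdiff star_subset).symm

lemma chi_contractible {G : Finset (Finset V)} (h : Contractible G) :
    IsComplex G → chi G = 1 := by
  induction h with
  | point v => intro _; simp [chi, w]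
  | step G x hx hS hGx ihS ihG =>
    intro hG
    have h1 : chi (sphere G x) = 1 := ihS (isComplex_sphere hG x)
    have h2 : chi (G \ star G x) = 1 := ihG (isComplex_sdiff_star hG x)
    have h3 := chi_ball_eq_one hG hx
    have h4 := chi_ball_split (G := G) x
    have h5 := chi_split (G := G) x
    linarith

lemma sphere_card_lt {G : Finset (Finset V)} {x : Finset V} (hx : x ∈ G) :
    (sphere G x).card < G.card := by
  have hsub : sphere G x ⊆ G.erase x := by
    intro z hz
    rw [sphere, Finset.mem_sdiff] at hz
    refine Finset.mem_erase.mpr ⟨?_, ball_subset hz.1⟩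
    rintro rfl
    exact hz.2 (mem_star_iff.mpr ⟨ball_subset hz.1, Finset.Subset.refl _⟩)
  calc (sphere G x).card ≤ (G.erase x).card := Finset.card_le_card hsub
    _ < G.card := Finset.card_erase_lt_of_mem hx

lemma chi_isSphere : ∀ (n : ℕ) (H : Finset (Finset V)) (e : ℤ), H.card ≤ n →
    IsComplex H → IsSphere e H → chi H = if Even e then 2 else 0 := by
  intro n
  induction n with
  | zero =>
    intro H e hcard hH hS
    cases hS with
    | empty => simp [chi, Int.even_iff]
    | mk e H hm hex =>
      obtain ⟨x, hx, _⟩ := hex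
      exact absurd (Finset.card_pos.mpr ⟨x, hx⟩) (by omega)
  | succ n ih =>
    intro H e hcard hH hS
    cases hS with
    | empty => simp [chi, Int.even_iff]
    | mk e H hm hex =>
      obtain ⟨x, hx, hc⟩ := hex
      cases hm with
      | mk e H hd hsph =>
        have hS1 : chi (sphere H x) = if Even (e - 1) then 2 else 0 := by
          refine ih (sphere H x) (e - 1) ?_ (isComplex_sphere hH x) (hsph x hx)
          have := sphere_card_lt hx
          omega
        have h2 : chi (H \ star H x) = 1 := chi_contractible hc (isComplex_sdiff_star hH x)
        have h3 := chi_ball_eq_one hH hx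
        have h4 := chi_ball_split (G := H) x
        have h5 := chi_split (G := H) x
        have hpar : Even (e - 1) ↔ ¬ Even e := Int.even_sub_one
        by_cases he : Even e
        · rw [if_pos he]
          rw [if_neg (by rw [hpar]; exact not_not_intro he)] at hS1
          linarith
        · rw [if_neg he]
          rw [if_pos (hpar.mpr he)] at hS1
          linarith

end Aux

/-- every odd-dimensional discrete manifold has zero Euler characteristic. -/
theorem chi_eq_zero_of_odd_manifold {V : Type} [DecidableEq V] (d : ℤ) (hd : Odd d)
    (G : Finset (Finset V)) (hG : IsComplex G) (hm : IsManifold d G) :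
    chi G = 0 := by
  cases hm with
  | mk _ _ hd0 hsph =>
    have hS2 : ∀ x ∈ G, chi (sphere G x) = 2 := by
      intro x hx
      have h := chi_isSphere (sphere G x).card (sphere G x) (d - 1) le_rfl
        (isComplex_sphere hG x) (hsph x hx)
      rw [h, if_pos]
      rw [Int.even_sub_one]
      exact Int.not_even_iff_odd.mpr hd
    have hstar : ∀ x ∈ G, chi (star G x) = -1 := by
      intro x hx
      have h3 := chi_ball_eq_one hG hx
      have h4 := chi_ball_split (G := G) x
      have h5 := hS2 x hx
      linarith
    have A1 : ∑ x ∈ G, w x * chi (star G x) = -chi G := by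
      rw [Finset.sum_congr rfl (fun x hx => by rw [hstar x hx] : ∀ x ∈ G, w x * chi (star G x) = w x * (-1))]
      rw [chi]
      simp [Finset.sum_neg_distrib, mul_comm]
    have A2 : ∑ x ∈ G, w x * chi (star G x) = chi G := by
      have step1 : ∀ x ∈ G, w x * chi (star G x) = ∑ y ∈ G, if x ⊆ y then w x * w y else 0 := by
        intro x hx
        rw [chi, star, Finset.mul_sum, Finset.sum_filter]
      rw [Finset.sum_congr rfl step1, Finset.sum_comm]
      have step2 : ∀ y ∈ G, (∑ x ∈ G, if x ⊆ y then w x * w y else 0) = w y := by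
        intro y hy
        rw [← Finset.sum_filter, ← Finset.sum_mul, sum_w_subsets hG hy, one_mul]
      rw [Finset.sum_congr rfl step2, chi]
    linarith

end SphereFormula
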